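/- For every real number $a \ge 0$, the function $z \mapsto \big(e + \tfrac{a}{z}\big)^{z}$ is monotone increasing on $(0,\infty)$. -/

import Mathlib

open Real

/-- Key inequality: for `0 < v ≤ u`, `v * log (e + u) ≤ u * log (e + v)`. -/
lemma key_ineq {u v : ℝ} (hv : 0 < v) (hvu : v ≤ u) :
    v * Real.log (Real.exp 1 + u) ≤ u * Real.log (Real.exp 1 + v) := by
  have he : (0:ℝ) < Real.exp 1 := Real.exp_pos 1
  have hev : 0 < Real.exp 1 + v := by linarith
  have heu : 0 < Real.exp 1 + u := by linarith
  -- log(e+u) - log(e+v) ≤ (u - v)/(e+v)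
  have h1 : Real.log (Real.exp 1 + u) - Real.log (Real.exp 1 + v)
      ≤ (u - v) / (Real.exp 1 + v) := by
    have := Real.log_le_sub_one_of_pos (x := (Real.exp 1 + u) / (Real.exp 1 + v))
      (by positivity)
    rw [Real.log_div (ne_of_gt heu) (ne_of_gt hev)] at this
    have h2 : (Real.exp 1 + u) / (Real.exp 1 + v) - 1 = (u - v) / (Real.exp 1 + v) := by
      field_simp
      ring
    linarith [this, h2.le, h2.ge]
  -- 1 ≤ log(e+v)
  have h3 : 1 ≤ Real.log (Real.exp 1 + v) := by
    have : Real.log (Real.exp 1) ≤ Real.log (Real.exp 1 + v) :=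
      Real.log_le_log he (by linarith)
    rwa [Real.log_exp] at this
  have h4 : v / (Real.exp 1 + v) ≤ 1 := by
    rw [div_le_one hev]; linarith
  -- combine
  have h5 : v * Real.log (Real.exp 1 + u)
      ≤ v * Real.log (Real.exp 1 + v) + v * ((u - v) / (Real.exp 1 + v)) := by
    nlinarith [h1, hv.le]
  have h6 : v * ((u - v) / (Real.exp 1 + v)) ≤ (u - v) * Real.log (Real.exp 1 + v) := by
    have : v * ((u - v) / (Real.exp 1 + v)) = (u - v) * (v / (Real.exp 1 + v)) := by ring
    rw [this]
    have huv : 0 ≤ u - v := by linarith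
    calc (u - v) * (v / (Real.exp 1 + v)) ≤ (u - v) * 1 :=
          mul_le_mul_of_nonneg_left h4 huv
      _ = u - v := mul_one _
      _ ≤ (u - v) * Real.log (Real.exp 1 + v) := by nlinarith
  nlinarith [h5, h6]

/-- For `a ≥ 0`, the function `z ↦ (e + a / z) ^ z` is increasing on `(0, ∞)`. -/
theorem stmt_2 (a : ℝ) (ha : 0 ≤ a) :
    MonotoneOn (fun z : ℝ => (Real.exp 1 + a / z) ^ z) (Set.Ioi 0) := by
  intro x hx y hy hxy
  simp only [Set.mem_Ioi] at hx hy
  have he : (0:ℝ) < Real.exp 1 := Real.exp_pos 1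
  have hbx : 0 < Real.exp 1 + a / x := by positivity
  have hby : 0 < Real.exp 1 + a / y := by positivity
  simp only
  rw [Real.rpow_def_of_pos hbx, Real.rpow_def_of_pos hby, Real.exp_le_exp]
  rcases eq_or_lt_of_le ha with h0 | h0
  · simp only [← h0, zero_div, add_zero, Real.log_exp, one_mul]
    linarith
  · -- a > 0
    have hvu : a / y ≤ a / x := div_le_div_of_nonneg_left ha hx hxy
    have hv : 0 < a / y := by positivity
    have key := key_ineq hv hvu
    -- key : (a/y) * log(e + a/x) ≤ (a/x) * log(e + a/y)
    have hxy' : 0 ≤ x * y / a := by positivity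
    have := mul_le_mul_of_nonneg_left key hxy'
    have hx' : x * y / a * (a / y) = x := by field_simp
    have hy' : x * y / a * (a / x) = y := by field_simp
    rw [mul_comm (Real.log (Real.exp 1 + a / x)) x, mul_comm (Real.log (Real.exp 1 + a / y)) y]
    calc x * Real.log (Real.exp 1 + a / x)
        = x * y / a * (a / y) * Real.log (Real.exp 1 + a / x) := by rw [hx']
      _ ≤ x * y / a * (a / x) * Real.log (Real.exp 1 + a / y) := by
          rw [mul_assoc, mul_assoc]; exact this
      _ = y * Real.log (Real.exp 1 + a / y) := by rw [hy']
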